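/- Let S_1, ..., S_N be a sequence over a field F and let R^k be the 2×2 polynomial matrix produced after k steps of the iterative Gröbner-basis algorithm (Algorithm on fields), with rows g_1^k and g_2^k. Then with respect to the top monomial ordering: deg g_1^k + deg g_2^k = k + 1; lpos(g_1^k) ≠ lpos(g_2^k); g_1^k(0) = (0,0) and the second component of g_2^k has constant term 1; and R^k(σ) annihilates the trajectory b_k. -/

import Mathlib

open Polynomial

open scoped Classical

/-- Support of a polynomial vector: monomials `(degree, position)` ordered lexicographically,
which is the term-over-position (top) ordering. -/
noncomputable def vsupp {R : Type*} [CommRing R] {q : ℕ} (f : Fin q → R[X]) :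
    Finset (Lex (ℕ × Fin q)) :=
  Finset.univ.biUnion fun i => (f i).support.image fun α => toLex (α, i)

/-- Leading monomial w.r.t. the top ordering (`⊥` for the zero vector). -/
noncomputable def vlm {R : Type*} [CommRing R] {q : ℕ} (f : Fin q → R[X]) :
    WithBot (Lex (ℕ × Fin q)) := (vsupp f).max

/-- Degree of the leading monomial (junk value `0` for the zero vector). -/
noncomputable def vdeg {R : Type*} [CommRing R] {q : ℕ} (f : Fin q → R[X]) : ℕ :=
  WithBot.unbotD 0 ((vlm f).map fun m => (ofLex m).1)

/-- Leading position. -/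
noncomputable def vlpos {R : Type*} [CommRing R] {q : ℕ} (f : Fin q → R[X]) : WithBot (Fin q) :=
  (vlm f).map fun m => (ofLex m).2

/-- Leading coefficient. -/
noncomputable def vlc {R : Type*} [CommRing R] {q : ℕ} (f : Fin q → R[X]) : R :=
  WithBot.unbotD 0 ((vlm f).map fun m => (f (ofLex m).2).coeff (ofLex m).1)

/-- The value at time `-n` of the trajectory obtained by applying the polynomial row vector
`f = (γ, λ)` (in the shift operator `σ`) to the trajectory `b_k`, which ends with
`…, (1,0), (0,S_1), …, (0,S_k)`. -/
noncomputable def errVal {R : Type*} [CommRing R] (S : ℕ → R) (k : ℕ)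
    (f : Fin 2 → R[X]) (n : ℕ) : R :=
  ∑ i ∈ (f 0).support, (f 0).coeff i * (if n + i = k then 1 else 0) +
  ∑ i ∈ (f 1).support, (f 1).coeff i * (if n + i < k then S (k - (n + i)) else 0)

/-- The field algorithm (Algorithm 1): `g k i` is row `i+1` of the matrix `R^k`.
Initialization `R^0 = [[x,0],[0,1]]`, and at step `k` the pivot `i⋆` is the index with
`Δ_{i⋆} ≠ 0` of minimal leading monomial; row 1 becomes `(x/Δ_{i⋆}) g_{i⋆}^{k-1}` and row 2
becomes `-Δ_2 g_1^{k-1} + Δ_1 g_2^{k-1}`, where `Δ_i = errVal S k (g (k-1) i) 0`. -/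
def FieldAlgRun {F : Type*} [Field F] (S : ℕ → F) (N : ℕ)
    (g : ℕ → Fin 2 → Fin 2 → Polynomial F) : Prop :=
  g 0 0 = ![X, 0] ∧ g 0 1 = ![0, 1] ∧
  ∀ k, 1 ≤ k → k ≤ N →
    ∃ istar : Fin 2,
      errVal S k (g (k - 1) istar) 0 ≠ 0 ∧
      (∀ i : Fin 2, errVal S k (g (k - 1) i) 0 ≠ 0 →
        vlm (g (k - 1) istar) ≤ vlm (g (k - 1) i)) ∧
      g k 0 = (C (errVal S k (g (k - 1) istar) 0)⁻¹ * X) • g (k - 1) istar ∧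
      g k 1 = (C (- errVal S k (g (k - 1) 1) 0)) • g (k - 1) 0 +
              (C (errVal S k (g (k - 1) 0) 0)) • g (k - 1) 1

section ErrValHelpers
variable {R : Type*} [CommRing R]

lemma sum_support_eq_range (p : R[X]) (w : ℕ → R) (m : ℕ)
    (hw : ∀ i, m ≤ i → w i = 0) :
    ∑ i ∈ p.support, p.coeff i * w i = ∑ i ∈ Finset.range m, p.coeff i * w i := by
  trans ∑ i ∈ p.support ∪ Finset.range m, p.coeff i * w i
  · exact Finset.sum_subset Finset.subset_union_left
      (fun x _ hx => by rw [Polynomial.notMem_support_iff.mp hx, zero_mul])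
  · exact (Finset.sum_subset Finset.subset_union_right
      (fun x _ hx => by rw [hw x (by simpa using hx), mul_zero])).symm

lemma errVal_eq_range (S : ℕ → R) (k : ℕ) (f : Fin 2 → R[X]) (n : ℕ) :
    errVal S k f n =
      ∑ i ∈ Finset.range (k + 1), (f 0).coeff i * (if n + i = k then 1 else 0) +
      ∑ i ∈ Finset.range (k + 1), (f 1).coeff i * (if n + i < k then S (k - (n + i)) else 0) := by
  rw [errVal, sum_support_eq_range _ _ (k+1) (fun i hi => by
      simp only [ite_eq_right_iff]; omega),
    sum_support_eq_range _ _ (k+1) (fun i hi => by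
      simp only [ite_eq_right_iff]; intro h; omega)]

lemma errVal_shift (S : ℕ → R) (k : ℕ) (f : Fin 2 → R[X]) (n : ℕ) :
    errVal S (k + 1) f (n + 1) = errVal S k f n := by
  rw [errVal_eq_range, errVal_eq_range]
  rw [Finset.sum_range_succ (n := k+1), Finset.sum_range_succ (n := k+1)]
  have h1 : (if n + 1 + (k + 1) = k + 1 then (1:R) else 0) = 0 := by
    rw [if_neg]; omega
  have h2 : (if n + 1 + (k + 1) < k + 1 then S (k + 1 - (n + 1 + (k + 1))) else 0) = 0 := by
    rw [if_neg]; omega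
  rw [h1, h2, mul_zero, mul_zero, add_zero, add_zero]
  congr 1
  · apply Finset.sum_congr rfl; intro i _
    congr 1
    by_cases h : n + i = k
    · rw [if_pos (by omega), if_pos h]
    · rw [if_neg (by omega), if_neg h]
  · apply Finset.sum_congr rfl; intro i _
    congr 1
    by_cases h : n + i < k
    · rw [if_pos (by omega), if_pos h]
      congr 1; omega
    · rw [if_neg (by omega), if_neg h]

lemma errVal_shift' (S : ℕ → R) (k : ℕ) (f : Fin 2 → R[X]) (n m : ℕ) :
    errVal S (k + m) f (n + m) = errVal S k f n := by
  induction m with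
  | zero => rfl
  | succ j ih => rw [← add_assoc, ← add_assoc, errVal_shift, ih]

lemma errVal_of_lt (S : ℕ → R) (k : ℕ) (f : Fin 2 → R[X]) (n : ℕ) (h : k < n) :
    errVal S k f n = 0 := by
  rw [errVal_eq_range]
  have h1 : ∀ i, (if n + i = k then (1:R) else 0) = 0 := fun i => by rw [if_neg]; omega
  have h2 : ∀ i, (if n + i < k then S (k - (n+i)) else 0) = 0 := fun i => by rw [if_neg]; omega
  simp [h1, h2]

lemma errVal_add (S : ℕ → R) (k : ℕ) (f h : Fin 2 → R[X]) (n : ℕ) :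
    errVal S k (f + h) n = errVal S k f n + errVal S k h n := by
  simp only [errVal_eq_range, Pi.add_apply, Polynomial.coeff_add, add_mul, Finset.sum_add_distrib]
  ring

lemma errVal_smul (S : ℕ → R) (k : ℕ) (c : R) (f : Fin 2 → R[X]) (n : ℕ) :
    errVal S k ((C c) • f) n = c * errVal S k f n := by
  simp only [errVal_eq_range, Pi.smul_apply, smul_eq_mul, coeff_C_mul, mul_add,
    Finset.mul_sum, mul_assoc]

lemma errVal_CX_smul (S : ℕ → R) (k : ℕ) (c : R) (f : Fin 2 → R[X]) (n : ℕ) :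
    errVal S k ((C c * X) • f) n = c * errVal S k f (n + 1) := by
  have key : ∀ (p : R[X]) (w : ℕ → R),
      ∑ i ∈ Finset.range (k+1), (C c * X * p).coeff i * w i
        = ∑ i ∈ Finset.range k, c * p.coeff i * w (i+1) := by
    intro p w
    rw [Finset.sum_range_succ']
    have h0 : (C c * X * p).coeff 0 = 0 := by
      rw [Polynomial.mul_coeff_zero]; simp
    rw [h0, zero_mul, add_zero]
    apply Finset.sum_congr rfl; intro i _
    rw [mul_assoc, Polynomial.coeff_C_mul, Polynomial.coeff_X_mul]
  rw [errVal_eq_range]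
  simp only [Pi.smul_apply, smul_eq_mul]
  rw [key, key, errVal_eq_range, mul_add, Finset.mul_sum, Finset.mul_sum]
  have h1 : (if n + 1 + k = k then (1:R) else 0) = 0 := by rw [if_neg]; omega
  have h2 : (if n + 1 + k < k then S (k - (n+1+k)) else 0) = 0 := by rw [if_neg]; omega
  rw [Finset.sum_range_succ (n := k), Finset.sum_range_succ (n := k), h1, h2]
  simp only [mul_zero, add_zero]
  congr 1
  · apply Finset.sum_congr rfl; intro i _
    have h3 : n + 1 + i = n + (i + 1) := by omega
    rw [h3]; ring
  · apply Finset.sum_congr rfl; intro i _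
    have h3 : n + 1 + i = n + (i + 1) := by omega
    rw [h3]; ring

end ErrValHelpers

section VlmHelpers
variable {R : Type*} [CommRing R] {q : ℕ}

lemma mem_vsupp' {f : Fin q → R[X]} {m : Lex (ℕ × Fin q)} :
    m ∈ vsupp f ↔ (f (ofLex m).2).coeff (ofLex m).1 ≠ 0 := by
  simp only [vsupp, Finset.mem_biUnion, Finset.mem_image, Finset.mem_univ, true_and,
    Polynomial.mem_support_iff]
  constructor
  · rintro ⟨i, a, ha, rfl⟩
    simpa using ha
  · intro h
    exact ⟨(ofLex m).2, (ofLex m).1, h, by simp⟩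

lemma mem_vsupp {f : Fin q → R[X]} {d : ℕ} {j : Fin q} :
    toLex (d, j) ∈ vsupp f ↔ (f j).coeff d ≠ 0 := by
  rw [mem_vsupp']; simp

lemma le_vlm_of_coeff {f : Fin q → R[X]} {d : ℕ} {j : Fin q}
    (h : (f j).coeff d ≠ 0) :
    ((toLex (d, j) : Lex (ℕ × Fin q)) : WithBot (Lex (ℕ × Fin q))) ≤ vlm f :=
  Finset.le_max (mem_vsupp.mpr h)

lemma vlm_eq_iff' {f : Fin q → R[X]} {m : Lex (ℕ × Fin q)} :
    vlm f = (m : WithBot (Lex (ℕ × Fin q))) ↔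
      ((f (ofLex m).2).coeff (ofLex m).1 ≠ 0 ∧
        ∀ e (l : Fin q), (f l).coeff e ≠ 0 → toLex (e, l) ≤ m) := by
  constructor
  · intro h
    refine ⟨mem_vsupp'.mp (Finset.mem_of_max h), fun e l hc => ?_⟩
    have h2 : ((toLex (e, l) : Lex (ℕ × Fin q)) : WithBot (Lex (ℕ × Fin q))) ≤ vlm f :=
      Finset.le_max (mem_vsupp.mpr hc)
    rw [h] at h2
    exact_mod_cast h2
  · rintro ⟨h1, h2⟩
    apply le_antisymm
    · rw [vlm, Finset.max_le_iff]
      intro a ha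
      have h5 := mem_vsupp'.mp ha
      have h3 := h2 _ _ h5
      have h4 : toLex ((ofLex a).1, (ofLex a).2) = a := by simp
      rw [h4] at h3
      exact_mod_cast h3
    · exact Finset.le_max (mem_vsupp'.mpr h1)

lemma exists_vlm {f : Fin q → R[X]} {d : ℕ} {j : Fin q}
    (h : (f j).coeff d ≠ 0) : ∃ m : Lex (ℕ × Fin q), vlm f = (m : WithBot (Lex (ℕ × Fin q))) := by
  have h2 := le_vlm_of_coeff h
  have hne : vlm f ≠ ⊥ := fun hb => by simp [hb] at h2
  obtain ⟨a, ha⟩ := WithBot.ne_bot_iff_exists.mp hne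
  exact ⟨a, ha.symm⟩

lemma coeff_eq_zero_of_vlm_lt {f : Fin q → R[X]} {d : ℕ} {j : Fin q}
    (h : vlm f < ((toLex (d, j) : Lex (ℕ × Fin q)) : WithBot (Lex (ℕ × Fin q)))) :
    (f j).coeff d = 0 := by
  by_contra hc
  exact absurd (le_vlm_of_coeff hc) (not_le.mpr h)

lemma vlm_eq_bot_comp_zero {f : Fin q → R[X]} (h : vlm f = ⊥) (j : Fin q) : f j = 0 := by
  ext d
  simp only [Polynomial.coeff_zero]
  by_contra hc
  have h2 := le_vlm_of_coeff hc
  rw [h] at h2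
  simp at h2

lemma vdeg_eq {f : Fin q → R[X]} {m : Lex (ℕ × Fin q)}
    (h : vlm f = (m : WithBot (Lex (ℕ × Fin q)))) : vdeg f = (ofLex m).1 := by
  simp [vdeg, h]

lemma vlpos_eq {f : Fin q → R[X]} {m : Lex (ℕ × Fin q)}
    (h : vlm f = (m : WithBot (Lex (ℕ × Fin q)))) : vlpos f = ((ofLex m).2 : WithBot (Fin q)) := by
  simp [vlpos, h]

end VlmHelpers

section VlmField
variable {F : Type*} [Field F] {q : ℕ}

lemma exists_vlm_of_errVal {S : ℕ → F} {k : ℕ} {f : Fin 2 → F[X]} {n : ℕ}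
    (h : errVal S k f n ≠ 0) :
    ∃ m : Lex (ℕ × Fin 2), vlm f = (m : WithBot (Lex (ℕ × Fin 2))) := by
  by_contra hb
  push_neg at hb
  apply h
  have hbot : vlm f = ⊥ := by
    rcases hv : vlm f with _ | m
    · rfl
    · exact absurd hv (hb m)
  have h0 := vlm_eq_bot_comp_zero hbot 0
  have h1 := vlm_eq_bot_comp_zero hbot 1
  rw [errVal, h0, h1]
  simp

lemma vlm_C_smul {c : F} (hc : c ≠ 0) (f : Fin q → F[X]) :
    vlm ((C c) • f) = vlm f := by
  have h : vsupp ((C c) • f) = vsupp f := by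
    ext m
    rw [mem_vsupp', mem_vsupp']
    simp [coeff_C_mul, hc]
  rw [vlm, h, vlm]

lemma vlm_CX_smul {c : F} (hc : c ≠ 0) {f : Fin q → F[X]} {d : ℕ} {j : Fin q}
    (hm : vlm f = ((toLex (d, j) : Lex (ℕ × Fin q)) : WithBot (Lex (ℕ × Fin q)))) :
    vlm ((C c * X) • f) =
      ((toLex (d + 1, j) : Lex (ℕ × Fin q)) : WithBot (Lex (ℕ × Fin q))) := by
  obtain ⟨h1, h2⟩ := vlm_eq_iff'.mp hm
  simp only [ofLex_toLex] at h1
  rw [vlm_eq_iff']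
  simp only [ofLex_toLex, Pi.smul_apply, smul_eq_mul]
  constructor
  · rw [mul_assoc, coeff_C_mul, coeff_X_mul]
    exact mul_ne_zero hc h1
  · intro e l hcl
    cases e with
    | zero =>
      exfalso
      apply hcl
      rw [Polynomial.mul_coeff_zero]
      simp
    | succ e' =>
      rw [mul_assoc, coeff_C_mul, coeff_X_mul] at hcl
      have h3 : (f l).coeff e' ≠ 0 := fun h => hcl (by rw [h, mul_zero])
      have h4 := h2 e' l h3
      rw [Prod.Lex.le_iff] at h4 ⊢
      rcases h4 with h4 | ⟨h4, h5⟩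
      · left; simpa using Nat.succ_lt_succ h4
      · right; exact ⟨by simpa using congrArg Nat.succ h4, h5⟩

lemma vlm_add_eq_right {f h : Fin q → F[X]} (hlt : vlm f < vlm h) :
    vlm (f + h) = vlm h := by
  have hne : vlm h ≠ ⊥ := fun hb => by simp [hb] at hlt
  obtain ⟨m, hm⟩ := WithBot.ne_bot_iff_exists.mp hne
  obtain ⟨h1, h2⟩ := vlm_eq_iff'.mp hm.symm
  rw [← hm, vlm_eq_iff']
  have hf0 : (f (ofLex m).2).coeff (ofLex m).1 = 0 := by
    apply coeff_eq_zero_of_vlm_lt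
    have h4 : toLex ((ofLex m).1, (ofLex m).2) = m := by simp
    rw [h4, hm]; exact hlt
  constructor
  · simpa [Pi.add_apply, Polynomial.coeff_add, hf0] using h1
  · intro e l hc
    rw [Pi.add_apply, Polynomial.coeff_add] at hc
    by_cases hfc : (f l).coeff e = 0
    · exact h2 e l (by simpa [hfc] using hc)
    · have h5 := le_vlm_of_coeff hfc
      have h6 : ((toLex (e, l) : Lex (ℕ × Fin q)) : WithBot (Lex (ℕ × Fin q))) < ↑m :=
        lt_of_le_of_lt h5 (hm ▸ hlt)
      exact_mod_cast h6.le

lemma vlm_add_eq_left {f h : Fin q → F[X]} (hlt : vlm h < vlm f) :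
    vlm (f + h) = vlm f := by
  rw [add_comm]; exact vlm_add_eq_right hlt

end VlmField

/-- Properties of the field algorithm (Lemma 2): for every `k ≤ N`, the rows `g_1^k, g_2^k`
of `R^k` satisfy: `deg g_1^k + deg g_2^k = k + 1`; their leading positions differ;
`g_1^k(0) = (0,0)` and the second component of `g_2^k` has constant term 1;
`Δ_1^{k+1} = 1`; and `R^k(σ)` annihilates the trajectory `b_k`. -/
theorem field_algorithm_properties {F : Type*} [Field F] (S : ℕ → F) (N : ℕ)
    (g : ℕ → Fin 2 → Fin 2 → Polynomial F) (hrun : FieldAlgRun S N g) :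
    ∀ k ≤ N,
      (vdeg (g k 0) + vdeg (g k 1) = k + 1) ∧
      vlpos (g k 0) ≠ vlpos (g k 1) ∧
      (∀ j, (g k 0 j).coeff 0 = 0) ∧
      (g k 1 1).coeff 0 = 1 ∧
      errVal S (k + 1) (g k 0) 0 = 1 ∧
      (∀ i n, errVal S k (g k i) n = 0) := by
  obtain ⟨h00, h01, hstep⟩ := hrun
  intro k
  induction k with
  | zero =>
    intro _
    have hv0 : vlm (g 0 0) = ((toLex (1, (0 : Fin 2)) : Lex (ℕ × Fin 2)) : WithBot _) := by
      rw [h00, vlm_eq_iff']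
      refine ⟨by simp [coeff_X], fun e l hc => ?_⟩
      fin_cases l
      · simp only [Fin.zero_eta, Matrix.cons_val_zero, coeff_X, ne_eq, ite_eq_right_iff,
          one_ne_zero, imp_false, not_not] at hc
        subst hc
        exact le_refl _
      · simp [Fin.mk_one] at hc
    have hv1 : vlm (g 0 1) = ((toLex (0, (1 : Fin 2)) : Lex (ℕ × Fin 2)) : WithBot _) := by
      rw [h01, vlm_eq_iff']
      refine ⟨by simp, fun e l hc => ?_⟩
      fin_cases l
      · simp [Fin.zero_eta] at hc
      · simp only [Fin.mk_one, Matrix.cons_val_one, Matrix.head_cons, Matrix.cons_val_zero, Polynomial.coeff_one,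
          ne_eq, ite_eq_right_iff, one_ne_zero, imp_false, not_not] at hc
        subst hc
        exact le_refl _
    refine ⟨?_, ?_, ?_, ?_, ?_, ?_⟩
    · rw [vdeg_eq hv0, vdeg_eq hv1]
      simp
    · rw [vlpos_eq hv0, vlpos_eq hv1]
      simp
      decide
    · intro j
      rw [h00]
      fin_cases j <;> simp
    · rw [h01]; simp
    · rw [h00, errVal_eq_range]
      simp [Finset.sum_range_succ, coeff_X]
    · intro i m
      fin_cases i <;> simp only [Fin.zero_eta, Fin.mk_one, Fin.isValue]
      · rw [h00, errVal_eq_range]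
        simp
      · rw [h01, errVal_eq_range]
        have hlt : ¬ (m + 0 < 0) := by omega
        simp [hlt]
  | succ n ih =>
    intro hk
    have hn : n ≤ N := by omega
    obtain ⟨ihdeg, ihpos, ihc0, ihc1, ihD1, ihann⟩ := ih hn
    obtain ⟨istar, hDs, hmin, hg0, hg1⟩ := hstep (n+1) (by omega) hk
    simp only [Nat.add_sub_cancel] at hDs hmin hg0 hg1
    rw [ihD1, map_one, one_smul] at hg1
    set D2 := errVal S (n+1) (g n 1) 0 with hD2def
    -- leading monomials of the old rows
    have hne1 : ((g n 1) 1).coeff 0 ≠ 0 := by rw [ihc1]; exact one_ne_zero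
    obtain ⟨m1, hm1⟩ := exists_vlm hne1
    obtain ⟨m0, hm0⟩ := exists_vlm_of_errVal (show errVal S (n+1) (g n 0) 0 ≠ 0 by
      rw [ihD1]; exact one_ne_zero)
    have hposne : (ofLex m0).2 ≠ (ofLex m1).2 := by
      rw [vlpos_eq hm0, vlpos_eq hm1] at ihpos
      exact fun h => ihpos (by rw [h])
    have hmne : (m0 : WithBot (Lex (ℕ × Fin 2))) ≠ (m1 : WithBot (Lex (ℕ × Fin 2))) := by
      intro h
      apply hposne
      rw [WithBot.coe_inj] at h
      rw [h]
    have hm0' : vlm (g n 0)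
        = ((toLex ((ofLex m0).1, (ofLex m0).2) : Lex (ℕ × Fin 2)) : WithBot _) := by
      simpa using hm0
    have hm1' : vlm (g n 1)
        = ((toLex ((ofLex m1).1, (ofLex m1).2) : Lex (ℕ × Fin 2)) : WithBot _) := by
      simpa using hm1
    have hdeg' : (ofLex m0).1 + (ofLex m1).1 = n + 1 := by
      rw [vdeg_eq hm0, vdeg_eq hm1] at ihdeg
      exact ihdeg
    fin_cases istar <;> simp only [Fin.zero_eta, Fin.mk_one, Fin.isValue] at hDs hmin hg0
    · -- pivot is row 1
      rw [ihD1, inv_one] at hg0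
      -- new leading monomials
      have hvlm0 : vlm (g (n+1) 0)
          = ((toLex ((ofLex m0).1 + 1, (ofLex m0).2) : Lex (ℕ × Fin 2)) : WithBot _) := by
        rw [hg0]
        exact vlm_CX_smul one_ne_zero hm0'
      have hvlm1 : vlm (g (n+1) 1) = (m1 : WithBot (Lex (ℕ × Fin 2))) := by
        by_cases hz : D2 = 0
        · rw [hg1, hz]
          simp only [neg_zero, map_zero, zero_smul, zero_add]
          exact hm1
        · have hle := hmin 1 hz
          have hlt : vlm (g n 0) < vlm (g n 1) := by
            rw [hm0, hm1] at hle ⊢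
            exact lt_of_le_of_ne hle hmne
          rw [hg1]
          rw [vlm_add_eq_right (by rw [vlm_C_smul (neg_ne_zero.mpr hz)]; exact hlt)]
          exact hm1
      refine ⟨?_, ?_, ?_, ?_, ?_, ?_⟩
      · rw [vdeg_eq hvlm0, vdeg_eq hvlm1]
        simp only [ofLex_toLex]
        omega
      · rw [vlpos_eq hvlm0, vlpos_eq hvlm1]
        simp only [ofLex_toLex]
        exact fun h => hposne (by exact_mod_cast h)
      · intro j
        rw [hg0]
        simp [Polynomial.mul_coeff_zero]
      · rw [hg1]
        simp [Pi.add_apply, coeff_C_mul, ihc0 1, ihc1]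
      · rw [hg0, errVal_CX_smul, one_mul, errVal_shift, ihD1]
      · intro i m
        fin_cases i <;> simp only [Fin.zero_eta, Fin.mk_one, Fin.isValue]
        · rw [hg0, errVal_CX_smul, errVal_shift, ihann 0 m, mul_zero]
        · rw [hg1, errVal_add, errVal_smul]
          cases m with
          | zero =>
            rw [ihD1, ← hD2def]
            ring
          | succ m' =>
            rw [errVal_shift, errVal_shift, ihann 0 m', ihann 1 m']
            ring
    · -- pivot is row 2
      have hD2ne : D2 ≠ 0 := hDs
      have hle := hmin 0 (by rw [ihD1]; exact one_ne_zero)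
      have hlt : vlm (g n 1) < vlm (g n 0) := by
        rw [hm0, hm1] at hle ⊢
        exact lt_of_le_of_ne hle (fun h => hmne h.symm)
      have hvlm0 : vlm (g (n+1) 0)
          = ((toLex ((ofLex m1).1 + 1, (ofLex m1).2) : Lex (ℕ × Fin 2)) : WithBot _) := by
        rw [hg0]
        exact vlm_CX_smul (inv_ne_zero hD2ne) hm1'
      have hvlm1 : vlm (g (n+1) 1) = (m0 : WithBot (Lex (ℕ × Fin 2))) := by
        rw [hg1]
        rw [vlm_add_eq_left (by rw [vlm_C_smul (neg_ne_zero.mpr hD2ne)]; exact hlt)]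
        rw [vlm_C_smul (neg_ne_zero.mpr hD2ne)]
        exact hm0
      refine ⟨?_, ?_, ?_, ?_, ?_, ?_⟩
      · rw [vdeg_eq hvlm0, vdeg_eq hvlm1]
        simp only [ofLex_toLex]
        omega
      · rw [vlpos_eq hvlm0, vlpos_eq hvlm1]
        simp only [ofLex_toLex]
        exact fun h => hposne (by exact_mod_cast h.symm)
      · intro j
        rw [hg0]
        simp [Polynomial.mul_coeff_zero]
      · rw [hg1]
        simp [Pi.add_apply, coeff_C_mul, ihc0 1, ihc1]
      · rw [hg0, errVal_CX_smul, errVal_shift, ← hD2def]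
        exact inv_mul_cancel₀ hD2ne
      · intro i m
        fin_cases i <;> simp only [Fin.zero_eta, Fin.mk_one, Fin.isValue]
        · rw [hg0, errVal_CX_smul, errVal_shift, ihann 1 m, mul_zero]
        · rw [hg1, errVal_add, errVal_smul]
          cases m with
          | zero =>
            rw [ihD1, ← hD2def]
            ring
          | succ m' =>
            rw [errVal_shift, errVal_shift, ihann 0 m', ihann 1 m']
            ring
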